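/- For all integers n ≥ 1 and k ≥ 0, the reciprocal power 1/n^k is given by the finite sum 1/n^k = Σ_{j=1}^{n} S(k, j) · n! / (n−j)!. -/

import Mathlib

/-- The generalized transformation coefficient
`S k j = (1/j!) · Σ_{m=1}^{j} C(j,m) · (−1)^{j−m} · m^{−k}`. -/
noncomputable def S (k j : ℕ) : ℝ :=
  (1 / (Nat.factorial j : ℝ)) *
    ∑ m ∈ Finset.Icc 1 j, (Nat.choose j m : ℝ) * (-1 : ℝ) ^ (j - m) / (m : ℝ) ^ k

theorem stmt_11 (n k : ℕ) (hn : 1 ≤ n) :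
    1 / (n : ℝ) ^ k =
      ∑ j ∈ Finset.Icc 1 n, S k j * ((Nat.factorial n : ℝ) / (Nat.factorial (n - j) : ℝ)) := by
  have key : ∀ j ∈ Finset.Icc 1 n,
      S k j * ((Nat.factorial n : ℝ) / (Nat.factorial (n - j) : ℝ)) =
      ∑ m ∈ Finset.Icc 1 j,
        (n.choose j : ℝ) * ((j.choose m : ℝ) * (-1 : ℝ) ^ (j - m) / (m : ℝ) ^ k) := by
    intro j hj
    simp only [Finset.mem_Icc] at hj
    have hc : (n.choose j : ℝ) = (Nat.factorial n : ℝ) /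
        ((Nat.factorial j : ℝ) * (Nat.factorial (n - j) : ℝ)) := Nat.cast_choose ℝ hj.2
    rw [S, mul_comm (1 / (Nat.factorial j : ℝ)) _, mul_assoc, Finset.sum_mul]
    refine Finset.sum_congr rfl fun m _ => ?_
    have h1 : (Nat.factorial j : ℝ) ≠ 0 := by positivity
    have h2 : (Nat.factorial (n - j) : ℝ) ≠ 0 := by positivity
    rw [hc]; field_simp
  rw [Finset.sum_congr rfl key]
  have hIcc : Finset.Icc 1 n = Finset.Ico 1 (n + 1) := (Finset.Ico_add_one_right_eq_Icc 1 n).symm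
  rw [hIcc]
  simp_rw [← Finset.Ico_add_one_right_eq_Icc 1 _]
  rw [← Finset.sum_Ico_Ico_comm]
  have inner : ∀ m ∈ Finset.Ico 1 (n + 1),
      (∑ j ∈ Finset.Ico m (n + 1),
        (n.choose j : ℝ) * ((j.choose m : ℝ) * (-1 : ℝ) ^ (j - m) / (m : ℝ) ^ k))
      = if m = n then 1 / (n : ℝ) ^ k else 0 := by
    intro m hm
    simp only [Finset.mem_Ico] at hm
    have hmn : m ≤ n := by omega
    have step : ∀ j ∈ Finset.Ico m (n + 1),
        (n.choose j : ℝ) * ((j.choose m : ℝ) * (-1 : ℝ) ^ (j - m) / (m : ℝ) ^ k)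
        = ((n.choose m : ℝ) / (m : ℝ) ^ k) *
            ((-1 : ℝ) ^ (j - m) * ((n - m).choose (j - m) : ℝ)) := by
      intro j hj
      simp only [Finset.mem_Ico] at hj
      have hjn : j ≤ n := by omega
      have := Nat.choose_mul (n := n) hj.1
      have hcast : (n.choose j : ℝ) * (j.choose m : ℝ)
          = (n.choose m : ℝ) * ((n - m).choose (j - m) : ℝ) := by exact_mod_cast congrArg Nat.cast this
      rw [div_mul_eq_mul_div, mul_div_assoc', ← mul_assoc, hcast]
      ring
    rw [Finset.sum_congr rfl step, ← Finset.mul_sum,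
      Finset.sum_Ico_eq_sum_range]
    have hlen : n + 1 - m = (n - m) + 1 := by omega
    rw [hlen]
    have hsimp : ∀ i, (-1 : ℝ) ^ (m + i - m) * ((n - m).choose (m + i - m) : ℝ)
        = (-1 : ℝ) ^ i * ((n - m).choose i : ℝ) := by
      intro i
      have h : m + i - m = i := by omega
      rw [h]
    simp_rw [hsimp]
    have halt : (∑ i ∈ Finset.range (n - m + 1), (-1 : ℝ) ^ i * ((n - m).choose i : ℝ))
        = if n - m = 0 then 1 else 0 := by
      have := Int.alternating_sum_range_choose (n := n - m)
      exact_mod_cast this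
    rw [halt]
    by_cases h : m = n
    · subst h
      simp [Nat.sub_self, Nat.choose_self]
    · have : n - m ≠ 0 := by omega
      simp [this, h]
  rw [Finset.sum_congr rfl inner, Finset.sum_ite_eq' (Finset.Ico 1 (n + 1)) n
    (fun _ => 1 / (n : ℝ) ^ k)]
  simp [Finset.mem_Ico, hn, Nat.lt_succ_self]
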